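/- arXiv:1612.02100 — 2 statements merged into one kernel-verified Lean document; each statement's English description precedes it below -/
import Mathlib

section
/- The rational function J(k) = k^3(k^3+8)^3 / (64(k^3-1)^3) is invariant under the involution η(k) = (k+2)/(k-1); that is, for every real k with k ≠ 1 and η(k)^3 ≠ 1, J(η(k)) = J(k). -/
noncomputable def η (k : ℝ) : ℝ := (k + 2) / (k - 1)

noncomputable def Jmod (k : ℝ) : ℝ := k^3 * (k^3 + 8)^3 / (64 * (k^3 - 1)^3)

/-- The modular invariant J(k) = k³(k³+8)³/(64(k³-1)³) is invariant under
the involution η(k) = (k+2)/(k-1). -/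
theorem J_invariant_under_involution (k : ℝ) (hk : k ≠ 1) (hη : (η k)^3 ≠ 1) :
    Jmod (η k) = Jmod k := by
  have h1 : k - 1 ≠ 0 := sub_ne_zero.mpr hk
  have h2 : k^3 - 1 ≠ 0 := by
    intro h
    apply hk
    nlinarith [sq_nonneg (k + 1), sq_nonneg (k - 1), sq_nonneg k]
  have h3 : (η k)^3 - 1 ≠ 0 := sub_ne_zero.mpr hη
  unfold η Jmod at *
  field_simp at h3 ⊢
  rw [div_eq_iff (pow_ne_zero _ (div_ne_zero_iff.mp h3).1)]
  ring
end

section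
/- For the one-parameter family of frameworks F(λ), the linear constraint system forces all off-diagonal entries of the infinitesimal Gram matrix to be equal, with common value μ·(ω̇₁₁+ω̇₂₂+ω̇₃₃) where μ = λ(1-λ)/(2-6λ(1-λ)). Concretely: let q = λ(1,1,1) ∈ ℝ³, Eᵢ = eᵢ - q for i=1,2,3 and E_{jk} = eⱼ+e_k - q for {j,k} ⊂ {1,2,3}. If a symmetric matrix Ω ∈ Sym₃(ℝ) and a vector v ∈ ℝ³ satisfy ⟨Ω Eᵢ, Eᵢ⟩ = 2⟨Eᵢ, v⟩ for i=1,2,3 and ⟨Ω E_{jk}, E_{jk}⟩ = 2⟨E_{jk}, v⟩ for all pairs j<k, and 2-6λ(1-λ) ≠ 0, then Ω₁₂ = Ω₂₃ = Ω₁₃ = μ·(Ω₁₁+Ω₂₂+Ω₃₃). -/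
open Matrix

/-- For the framework F(λ): with q = λ(1,1,1), Eᵢ = eᵢ - q and
E_{jk} = eⱼ + e_k - q, if a symmetric Ω and a vector v satisfy
⟨Ω E, E⟩ = 2⟨E, v⟩ for all six edge vectors, and 2-6λ(1-λ) ≠ 0, then all
off-diagonal entries of Ω equal μ·(Ω₁₁+Ω₂₂+Ω₃₃) with
μ = λ(1-λ)/(2-6λ(1-λ)). -/
theorem framework_offdiagonal (lam : ℝ) (hlam : 2 - 6*lam*(1-lam) ≠ 0)
    (Ω : Matrix (Fin 3) (Fin 3) ℝ) (hΩ : Ω.IsSymm) (v : Fin 3 → ℝ) :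
    let q : Fin 3 → ℝ := fun _ => lam
    let e : Fin 3 → Fin 3 → ℝ := fun i => Pi.single i 1
    let E : Fin 3 → Fin 3 → ℝ := fun i => e i - q
    let F : Fin 3 → Fin 3 → Fin 3 → ℝ := fun j k => e j + e k - q
    let μ : ℝ := lam*(1-lam) / (2 - 6*lam*(1-lam))
    (∀ i : Fin 3, (Ω.mulVec (E i)) ⬝ᵥ (E i) = 2 * ((E i) ⬝ᵥ v)) →
    (∀ j k : Fin 3, j < k → (Ω.mulVec (F j k)) ⬝ᵥ (F j k) = 2 * ((F j k) ⬝ᵥ v)) →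
    Ω 0 1 = μ * (Ω 0 0 + Ω 1 1 + Ω 2 2) ∧
    Ω 1 2 = μ * (Ω 0 0 + Ω 1 1 + Ω 2 2) ∧
    Ω 0 2 = μ * (Ω 0 0 + Ω 1 1 + Ω 2 2) := by
  intro q e E F μ hE hF
  have s01 : Ω 1 0 = Ω 0 1 := hΩ.apply 0 1
  have s02 : Ω 2 0 = Ω 0 2 := hΩ.apply 0 2
  have s12 : Ω 2 1 = Ω 1 2 := hΩ.apply 1 2
  have h1 := hE 0
  have h2 := hE 1
  have h3 := hE 2
  have h12 := hF 0 1 (by decide)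
  have h13 := hF 0 2 (by decide)
  have h23 := hF 1 2 (by decide)
  simp only [E, F, e, q, mulVec, dotProduct, Fin.sum_univ_three, Pi.sub_apply,
    Pi.add_apply, Pi.single_apply, s01, s02, s12] at h1 h2 h3 h12 h13 h23
  norm_num [Fin.ext_iff] at h1 h2 h3 h12 h13 h23
  refine ⟨?_, ?_, ?_⟩
  · show _ = lam*(1-lam) / (2 - 6*lam*(1-lam)) * _
    rw [div_mul_eq_mul_div, eq_div_iff hlam]
    linear_combination (-(lam))*(h1+h2+h3) + (1-3*lam)*(h12-h1-h2)
      + lam^2*((h12-h1-h2)-(h13-h1-h3)) + lam^2*((h12-h1-h2)-(h23-h2-h3))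
  · show _ = lam*(1-lam) / (2 - 6*lam*(1-lam)) * _
    rw [div_mul_eq_mul_div, eq_div_iff hlam]
    linear_combination (-(lam))*(h1+h2+h3) + (1-3*lam)*(h23-h2-h3)
      + lam^2*((h23-h2-h3)-(h12-h1-h2)) + lam^2*((h23-h2-h3)-(h13-h1-h3))
  · show _ = lam*(1-lam) / (2 - 6*lam*(1-lam)) * _
    rw [div_mul_eq_mul_div, eq_div_iff hlam]
    linear_combination (-(lam))*(h1+h2+h3) + (1-3*lam)*(h13-h1-h3)
      + lam^2*((h13-h1-h3)-(h12-h1-h2)) + lam^2*((h13-h1-h3)-(h23-h2-h3))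
end
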